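/- With the above notation, let m = (m_1,…,m_r) be a dominant tuple of integers and let 1 ≤ k ≤ r be such that m + e_k is dominant (i.e., k = 1 or m_{k−1} > m_k). Then A(m,k) ≠ 0. -/
import Mathlib


open Finset

/-- A tuple of integers is dominant if its entries are weakly decreasing and nonnegative. -/
def Dominant {r : ℕ} (m : Fin r → ℤ) : Prop :=
  (∀ j k : Fin r, j ≤ k → m k ≤ m j) ∧ ∀ j : Fin r, 0 ≤ m j

instance {r : ℕ} (m : Fin r → ℤ) : Decidable (Dominant m) := by
  unfold Dominant; infer_instance

/-- The genus `p = (e+1) + (r-1)d + b/2`. -/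
noncomputable def genusP (r : ℕ) (b d e : ℝ) : ℝ := (e + 1) + ((r : ℝ) - 1) * d + b / 2

/-- `n = r(p + b/2)`. -/
noncomputable def dimN (r : ℕ) (b d e : ℝ) : ℝ := r * (genusP r b d e + b / 2)

/-- `ρ_k = (r-k)d/2 + e/2 + b/4` (1-indexed `k`). -/
noncomputable def rho (r : ℕ) (b d e : ℝ) (k : Fin r) : ℝ :=
  ((r : ℝ) - ((k : ℕ) + 1)) * d / 2 + e / 2 + b / 4

/-- The coefficient `A(m,k)`. -/
noncomputable def Acoef (r : ℕ) (b d e : ℝ) (m : Fin r → ℤ) (k : Fin r) : ℝ :=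
  (genusP r b d e / (2 * dimN r b d e)) *
    ((2 * ((m k : ℝ) + rho r b d e k) + b / 2 + 1) *
        (2 * ((m k : ℝ) + rho r b d e k) + b / 2 + e)) /
      ((2 * ((m k : ℝ) + rho r b d e k)) * (2 * ((m k : ℝ) + rho r b d e k) + 1)) *
    ∏ j ∈ univ.erase k,
      ((((m k : ℝ) + rho r b d e k) - ((m j : ℝ) + rho r b d e j) + d / 2) *
          (((m k : ℝ) + rho r b d e k) + ((m j : ℝ) + rho r b d e j) + d / 2)) /
        ((((m k : ℝ) + rho r b d e k) - ((m j : ℝ) + rho r b d e j)) *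
          (((m k : ℝ) + rho r b d e k) + ((m j : ℝ) + rho r b d e j)))

/-- The coefficient `B(m,k)`. -/
noncomputable def Bcoef (r : ℕ) (b d e : ℝ) (m : Fin r → ℤ) (k : Fin r) : ℝ :=
  (genusP r b d e / (2 * dimN r b d e)) *
    ((2 * ((m k : ℝ) + rho r b d e k) - b / 2 - 1) *
        (2 * ((m k : ℝ) + rho r b d e k) - b / 2 - e)) /
      ((2 * ((m k : ℝ) + rho r b d e k)) * (2 * ((m k : ℝ) + rho r b d e k) - 1)) *
    ∏ j ∈ univ.erase k,
      ((((m k : ℝ) + rho r b d e k) + ((m j : ℝ) + rho r b d e j) - d / 2) *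
          (((m k : ℝ) + rho r b d e k) - ((m j : ℝ) + rho r b d e j) - d / 2)) /
        ((((m k : ℝ) + rho r b d e k) + ((m j : ℝ) + rho r b d e j)) *
          (((m k : ℝ) + rho r b d e k) - ((m j : ℝ) + rho r b d e j)))

/-- The coefficient `C(m)`. -/
noncomputable def Ccoef (r : ℕ) (b d e : ℝ) (m : Fin r → ℤ) : ℝ :=
  1 - (∑ k ∈ univ.filter (fun k : Fin r =>
        Dominant (fun j => m j + if j = k then 1 else 0)), Acoef r b d e m k)
    - (∑ k ∈ univ.filter (fun k : Fin r =>
        Dominant (fun j => m j - if j = k then 1 else 0)), Bcoef r b d e m k)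

theorem Acoef_ne_zero_of_dominant_add (r : ℕ) (hr : 1 ≤ r) (b d e : ℝ)
    (hb : 1 ≤ b) (he : 0 ≤ e) (hd : 1 < r → 1 ≤ d)
    (m : Fin r → ℤ) (hm : Dominant m) (k : Fin r)
    (hk : Dominant (fun j => m j + if j = k then 1 else 0)) :
    Acoef r b d e m k ≠ 0 := by
  -- basic positivity facts
  have hrho : ∀ j : Fin r, 0 < rho r b d e j := by
    intro j
    unfold rho
    have h1 : (0:ℝ) ≤ ((r : ℝ) - ((j : ℕ) + 1)) * d := by
      rcases eq_or_lt_of_le (Nat.succ_le_of_lt j.isLt) with h | h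
      · have : ((r : ℝ) - ((j : ℕ) + 1)) = 0 := by
          have : ((j : ℕ) + 1 : ℝ) = (r : ℝ) := by exact_mod_cast h
          linarith
        simp [this]
      · have hr2 : 1 < r := by omega
        have hd1 := hd hr2
        have hjr : ((j : ℕ) + 1 : ℝ) ≤ (r : ℝ) := by exact_mod_cast h.le
        nlinarith
    linarith
  have hX : ∀ j : Fin r, 0 < (m j : ℝ) + rho r b d e j := by
    intro j
    have := hm.2 j
    have : (0:ℝ) ≤ (m j : ℝ) := by exact_mod_cast this
    linarith [hrho j]
  have hrd : (0:ℝ) ≤ ((r : ℝ) - 1) * d := by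
    rcases eq_or_lt_of_le hr with h | h
    · have : ((r : ℝ) - 1) = 0 := by
        have : ((r : ℕ) : ℝ) = 1 := by exact_mod_cast h.symm
        linarith
      simp [this]
    · have hd1 := hd h
      have : (1:ℝ) ≤ (r : ℝ) := by exact_mod_cast hr
      nlinarith
  have hp : 0 < genusP r b d e := by unfold genusP; linarith
  have hn : 0 < dimN r b d e := by
    unfold dimN
    have hr' : (0:ℝ) < (r : ℝ) := by exact_mod_cast hr
    have : 0 < genusP r b d e + b / 2 := by linarith
    positivity
  unfold Acoef
  apply mul_ne_zero
  · apply div_ne_zero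
    · apply mul_ne_zero
      · exact ne_of_gt (div_pos hp (by linarith))
      · have := hX k
        have h1 : 0 < 2 * ((m k : ℝ) + rho r b d e k) + b / 2 + 1 := by linarith
        have h2 : 0 < 2 * ((m k : ℝ) + rho r b d e k) + b / 2 + e := by linarith
        exact ne_of_gt (mul_pos h1 h2)
    · have := hX k
      have h1 : 0 < 2 * ((m k : ℝ) + rho r b d e k) := by linarith
      have h2 : 0 < 2 * ((m k : ℝ) + rho r b d e k) + 1 := by linarith
      exact ne_of_gt (mul_pos h1 h2)
  · rw [Finset.prod_ne_zero_iff]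
    intro j hj
    have hjk : j ≠ k := Finset.ne_of_mem_erase hj
    have hvne : (j : ℕ) ≠ (k : ℕ) := fun h => hjk (Fin.ext h)
    have hr2 : 1 < r := by
      have := j.isLt; have := k.isLt; omega
    have hd1 : (1:ℝ) ≤ d := hd hr2
    have hXk := hX k
    have hXj := hX j
    have hdiff : rho r b d e k - rho r b d e j
        = (((j : ℕ) : ℝ) - ((k : ℕ) : ℝ)) * d / 2 := by
      unfold rho; ring
    have hsum2 : (0:ℝ) < ((m k : ℝ) + rho r b d e k) + ((m j : ℝ) + rho r b d e j) := by
      linarith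
    have hsum1 : (0:ℝ) < ((m k : ℝ) + rho r b d e k) + ((m j : ℝ) + rho r b d e j) + d / 2 := by
      linarith
    rcases lt_or_gt_of_ne hvne with hlt | hgt
    · -- j < k : numerator-diff and diff both negative
      have hmj : (m k : ℤ) + 1 ≤ m j := by
        have h := hk.1 j k (Fin.le_def.mpr hlt.le)
        simpa [hjk, if_neg hjk] using h
      have hmjr : (m k : ℝ) + 1 ≤ (m j : ℝ) := by exact_mod_cast hmj
      have hjkr : ((j : ℕ) : ℝ) + 1 ≤ ((k : ℕ) : ℝ) := by exact_mod_cast hlt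
      have hnp : (((j : ℕ) : ℝ) - ((k : ℕ) : ℝ) + 1) * d ≤ 0 :=
        mul_nonpos_of_nonpos_of_nonneg (by linarith) (by linarith)
      have hdn : ((m k : ℝ) + rho r b d e k) - ((m j : ℝ) + rho r b d e j) + d / 2 < 0 := by
        nlinarith [hdiff]
      have hdd : ((m k : ℝ) + rho r b d e k) - ((m j : ℝ) + rho r b d e j) < 0 := by
        linarith
      exact div_ne_zero (mul_ne_zero (ne_of_lt hdn) (ne_of_gt hsum1))
        (mul_ne_zero (ne_of_lt hdd) (ne_of_gt hsum2))
    · -- k < j : diff positive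
      have hmj : (m j : ℤ) ≤ m k := hm.1 k j (Fin.le_def.mpr hgt.le)
      have hmjr : (m j : ℝ) ≤ (m k : ℝ) := by exact_mod_cast hmj
      have hjkr : ((k : ℕ) : ℝ) + 1 ≤ ((j : ℕ) : ℝ) := by exact_mod_cast hgt
      have hnp : d ≤ (((j : ℕ) : ℝ) - ((k : ℕ) : ℝ)) * d := by nlinarith
      have hdd : 0 < ((m k : ℝ) + rho r b d e k) - ((m j : ℝ) + rho r b d e j) := by
        nlinarith [hdiff]
      have hdn : 0 < ((m k : ℝ) + rho r b d e k) - ((m j : ℝ) + rho r b d e j) + d / 2 := by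
        linarith
      exact div_ne_zero (mul_ne_zero (ne_of_gt hdn) (ne_of_gt hsum1))
        (mul_ne_zero (ne_of_gt hdd) (ne_of_gt hsum2))
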